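/- Let m and n be positive integers with gcd(n, φ(m)) ≠ 1, where φ is Euler's totient function. Then there exists a non-abelian group G of order mn that factorises as G = ⟨a⟩⟨b⟩ with |a| = m, |b| = n, and ⟨a⟩ ∩ ⟨b⟩ = 1. -/

import Mathlib

open SemidirectProduct Multiplicative

/-- Additive automorphisms give multiplicative automorphisms of the `Multiplicative` tag. -/
def addAutToMulAut (A : Type*) [AddGroup A] : Multiplicative (AddAut A) →* MulAut (Multiplicative A) where
  toFun f := AddEquiv.toMultiplicative (toAdd f)
  map_one' := rfl
  map_mul' f g := rfl

/-- If `gcd(n, φ(m)) ≠ 1`, there exists a non-abelian group of order `mn` that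
factorises as an exact product of cyclic subgroups of orders `m` and `n`. -/
theorem exists_nonabelian_exact_bicyclic (m n : ℕ) (hm : 0 < m) (hn : 0 < n)
    (h : Nat.gcd n (Nat.totient m) ≠ 1) :
    ∃ (G : Type) (_ : Group G) (_ : Finite G) (a b : G),
      (∃ x y : G, x * y ≠ y * x) ∧
      Nat.card G = m * n ∧ orderOf a = m ∧ orderOf b = n ∧
      Subgroup.zpowers a ⊓ Subgroup.zpowers b = ⊥ ∧
      ∀ g : G, ∃ i j : ℤ, g = a ^ i * b ^ j := by
  haveI : NeZero m := ⟨hm.ne'⟩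
  haveI : NeZero n := ⟨hn.ne'⟩
  set p := (Nat.gcd n (Nat.totient m)).minFac with hpdef
  have hpp : p.Prime := Nat.minFac_prime h
  haveI : Fact p.Prime := ⟨hpp⟩
  have hpn : p ∣ n := (Nat.minFac_dvd _).trans (Nat.gcd_dvd_left _ _)
  have hpt : p ∣ Nat.totient m := (Nat.minFac_dvd _).trans (Nat.gcd_dvd_right _ _)
  have hcard : p ∣ Fintype.card (ZMod m)ˣ := by
    rw [ZMod.card_units_eq_totient m]; exact hpt
  obtain ⟨u, hu⟩ := exists_prime_orderOf_dvd_card p hcard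
  have hune : u ≠ 1 := by
    intro h1
    rw [h1, orderOf_one] at hu
    exact hpp.one_lt.ne hu
  have hun : (n : ℤ) • (Additive.ofMul u) = 0 := by
    have : u ^ n = 1 := by
      rw [← orderOf_dvd_iff_pow_eq_one, hu]; exact hpn
    simpa [← ofMul_pow] using congrArg Additive.ofMul this
  have hlift : (zmultiplesHom (Additive (ZMod m)ˣ) (Additive.ofMul u)) (n : ℤ) = 0 := by
    simpa using hun
  let f : Multiplicative (ZMod n) →* (ZMod m)ˣ :=
    AddMonoidHom.toMultiplicativeLeft (ZMod.lift n ⟨_, hlift⟩)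
  let φ : Multiplicative (ZMod n) →* MulAut (Multiplicative (ZMod m)) :=
    ((addAutToMulAut (ZMod m)).comp
      (AddMonoidHom.toMultiplicativeRight (ZMod.AddAutEquivUnits m).symm.toAddMonoidHom)).comp f
  have hf1 : f (ofAdd (1 : ZMod n)) = u := by
    show (ZMod.lift n ⟨_, hlift⟩ (toAdd (ofAdd (1 : ZMod n)))).toMul = u
    have : (toAdd (ofAdd (1 : ZMod n))) = ((1 : ℤ) : ZMod n) := by simp
    rw [this, ZMod.lift_coe]
    simp
  have hφ : ∀ x : ZMod m, φ (ofAdd (1 : ZMod n)) (ofAdd x) = ofAdd ((u : ZMod m) * x) := by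
    intro x
    show (addAutToMulAut (ZMod m))
      (ofAdd ((ZMod.AddAutEquivUnits m).symm (Additive.ofMul (f (ofAdd 1))))) (ofAdd x)
      = ofAdd ((u : ZMod m) * x)
    rw [hf1]
    rfl
  have huval : (u : ZMod m) ≠ 1 := fun hv => hune (Units.val_eq_one.mp hv)
  let e : (Multiplicative (ZMod m) ⋊[φ] Multiplicative (ZMod n)) ≃ (ZMod m) × (ZMod n) :=
    ⟨fun g => (toAdd g.left, toAdd g.right), fun x => ⟨ofAdd x.1, ofAdd x.2⟩,
      fun g => rfl, fun x => rfl⟩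
  refine ⟨Multiplicative (ZMod m) ⋊[φ] Multiplicative (ZMod n), inferInstance,
    Finite.of_equiv _ e.symm,
    inl (ofAdd 1), inr (ofAdd 1), ?_, ?_, ?_, ?_, ?_, ?_⟩
  · -- nonabelian
    refine ⟨inl (ofAdd 1), inr (ofAdd 1), fun heq => ?_⟩
    have h1 : ((inl (ofAdd 1) * inr (ofAdd 1) :
        Multiplicative (ZMod m) ⋊[φ] Multiplicative (ZMod n))).left = ofAdd (1 : ZMod m) := by
      simp
    have h2 : ((inr (ofAdd 1) * inl (ofAdd 1) :
        Multiplicative (ZMod m) ⋊[φ] Multiplicative (ZMod n))).left = ofAdd ((u : ZMod m)) := by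
      simp [hφ]
    rw [heq, h2] at h1
    exact huval (by simpa using congrArg toAdd h1)
  · -- card
    rw [Nat.card_congr e, Nat.card_prod, Nat.card_zmod, Nat.card_zmod]
  · -- order a
    rw [orderOf_injective inl inl_injective, orderOf_ofAdd_eq_addOrderOf]
    exact ZMod.addOrderOf_one m
  · -- order b
    rw [orderOf_injective inr inr_injective, orderOf_ofAdd_eq_addOrderOf]
    exact ZMod.addOrderOf_one n
  · -- trivial intersection
    rw [eq_bot_iff]
    rintro g ⟨hga, hgb⟩
    obtain ⟨i, hi⟩ := Subgroup.mem_zpowers_iff.mp hga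
    obtain ⟨j, hj⟩ := Subgroup.mem_zpowers_iff.mp hgb
    have hi' : (inl (ofAdd (1 : ZMod m)) :
        Multiplicative (ZMod m) ⋊[φ] Multiplicative (ZMod n)) ^ i = inl (ofAdd 1 ^ i) :=
      (map_zpow inl _ _).symm
    have hj' : (inr (ofAdd (1 : ZMod n)) :
        Multiplicative (ZMod m) ⋊[φ] Multiplicative (ZMod n)) ^ j = inr (ofAdd 1 ^ j) :=
      (map_zpow inr _ _).symm
    have hr : g.right = 1 := by rw [← hi, hi', right_inl]
    have hl : g.left = 1 := by rw [← hj, hj', left_inr]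
    rw [Subgroup.mem_bot]
    exact SemidirectProduct.ext hl hr
  · -- factorisation
    intro g
    obtain ⟨i, hi⟩ := ZMod.intCast_surjective (toAdd g.left)
    obtain ⟨j, hj⟩ := ZMod.intCast_surjective (toAdd g.right)
    refine ⟨i, j, ?_⟩
    have h1 : (ofAdd (1 : ZMod m)) ^ i = g.left := by
      rw [← ofAdd_toAdd g.left, ← hi, ← ofAdd_zsmul]
      norm_num
    have h2 : (ofAdd (1 : ZMod n)) ^ j = g.right := by
      rw [← ofAdd_toAdd g.right, ← hj, ← ofAdd_zsmul]
      norm_num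
    have hi' : (inl (ofAdd (1 : ZMod m)) :
        Multiplicative (ZMod m) ⋊[φ] Multiplicative (ZMod n)) ^ i = inl (ofAdd 1 ^ i) :=
      (map_zpow inl _ _).symm
    have hj' : (inr (ofAdd (1 : ZMod n)) :
        Multiplicative (ZMod m) ⋊[φ] Multiplicative (ZMod n)) ^ j = inr (ofAdd 1 ^ j) :=
      (map_zpow inr _ _).symm
    rw [hi', hj', h1, h2, inl_left_mul_inr_right]
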